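/- Let D be a finite DAG with vertex set partitioned into sources S, internal vertices I, and sinks T, let X ⊆ I, and let i, j be vertices not in X. Then (i,j) is an edge of D_X (the graph obtained by eliminating all vertices of X in some order) if and only if D contains a directed path from i to j all of whose internal (intermediate) vertices lie in X. -/

import Mathlib

variable {V : Type*} [DecidableEq V] [Fintype V]

/-- In-neighborhood of `v` in the edge set `E`. -/
def inN (E : Finset (V × V)) (v : V) : Finset V :=
  (E.filter fun p => p.2 = v).image Prod.fst

/-- Out-neighborhood of `v` in the edge set `E`. -/
def outN (E : Finset (V × V)) (v : V) : Finset V :=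
  (E.filter fun p => p.1 = v).image Prod.snd

/-- Elimination of vertex `v`: delete `v` and add an edge from every in-neighbor
to every out-neighbor of `v` (if not already present). -/
def elimv (E : Finset (V × V)) (v : V) : Finset (V × V) :=
  (E ∪ (inN E v) ×ˢ (outN E v)).filter fun p => p.1 ≠ v ∧ p.2 ≠ v

/-- Eliminate a sequence of vertices, in order. -/
def elimSeq (E : Finset (V × V)) (σ : List V) : Finset (V × V) :=
  σ.foldl elimv E

/-- Markowitz degree of `v`: in-degree times out-degree. -/
def mark (E : Finset (V × V)) (v : V) : ℕ :=
  (inN E v).card * (outN E v).card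

/-- Cost of an elimination sequence: sum of the Markowitz degrees at the
time of each elimination. -/
def cost (E : Finset (V × V)) : List V → ℕ
  | [] => 0
  | v :: σ => mark E v + cost (elimv E v) σ

/-- The directed graph with edge set `E` is acyclic. -/
def Acyclic (E : Finset (V × V)) : Prop :=
  ∀ v : V, ¬ Relation.TransGen (fun a b => (a, b) ∈ E) v v

/-- `E` is an acyclic digraph whose vertices are partitioned into sources `S`
(no in-edges), internal vertices `I`, and sinks `T` (no out-edges). -/
def IsDAGPartition (E : Finset (V × V)) (S I T : Finset V) : Prop :=
  Acyclic E ∧ Disjoint S I ∧ Disjoint S T ∧ Disjoint I T ∧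
    S ∪ I ∪ T = Finset.univ ∧ (∀ s ∈ S, inN E s = ∅) ∧ (∀ t ∈ T, outN E t = ∅)

/-- There is a directed path from `i` to `j` all of whose internal vertices
lie in `X` (the single-edge path has no internal vertices). -/
def PathThrough (E : Finset (V × V)) (X : Finset V) (i j : V) : Prop :=
  ∃ l : List V, (∀ v ∈ l, v ∈ X) ∧ List.Chain' (fun a b => (a, b) ∈ E) (i :: (l ++ [j]))

lemma mem_inN_iff {E : Finset (V × V)} {v a : V} : a ∈ inN E v ↔ (a, v) ∈ E := by
  simp only [inN, Finset.mem_image, Finset.mem_filter]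
  constructor
  · rintro ⟨⟨x, y⟩, ⟨hxy, rfl⟩, rfl⟩; exact hxy
  · intro h; exact ⟨(a, v), ⟨h, rfl⟩, rfl⟩

lemma mem_outN_iff {E : Finset (V × V)} {v b : V} : b ∈ outN E v ↔ (v, b) ∈ E := by
  simp only [outN, Finset.mem_image, Finset.mem_filter]
  constructor
  · rintro ⟨⟨x, y⟩, ⟨hxy, rfl⟩, rfl⟩; exact hxy
  · intro h; exact ⟨(v, b), ⟨h, rfl⟩, rfl⟩

lemma mem_elimv_iff {E : Finset (V × V)} {v a b : V} :
    (a, b) ∈ elimv E v ↔ (a ≠ v ∧ b ≠ v) ∧ ((a, b) ∈ E ∨ ((a, v) ∈ E ∧ (v, b) ∈ E)) := by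
  simp only [elimv, Finset.mem_filter, Finset.mem_union, Finset.mem_product,
    mem_inN_iff, mem_outN_iff]
  tauto

lemma lemAB (E : Finset (V × V)) (v : V) : ∀ s : List V,
    (∀ a, a ≠ v → List.Chain (fun a b => (a, b) ∈ E) a s →
      List.Chain (fun a b => (a, b) ∈ elimv E v) a (s.filter (· ≠ v))) ∧
    (List.Chain (fun a b => (a, b) ∈ E) v s →
      s.filter (· ≠ v) = [] ∨ ∃ b t, s.filter (· ≠ v) = b :: t ∧ (v, b) ∈ E ∧
        List.Chain (fun a b => (a, b) ∈ elimv E v) b t) := by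
  intro s
  induction s with
  | nil =>
    refine ⟨fun a _ _ => ?_, fun _ => Or.inl rfl⟩
    exact List.Chain.nil
  | cons c s' ih =>
    constructor
    · intro a ha h
      rw [List.Chain, List.chain_cons] at h
      obtain ⟨hac, hcs⟩ := h
      by_cases hc : c = v
      · subst hc
        have hfil : (c :: s').filter (· ≠ c) = s'.filter (· ≠ c) := by simp
        rw [hfil]
        rcases ih.2 hcs with hnil | ⟨b, t, heq, hvb, hchain⟩
        · rw [hnil]; exact List.Chain.nil
        · rw [heq, List.Chain, List.chain_cons]
          have hb : b ≠ c := by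
            have hmem : b ∈ (s'.filter (· ≠ c)) := heq ▸ List.mem_cons_self
            simpa using (List.mem_filter.1 hmem).2
          exact ⟨mem_elimv_iff.2 ⟨⟨ha, hb⟩, Or.inr ⟨hac, hvb⟩⟩, hchain⟩
      · have hfil : (c :: s').filter (· ≠ v) = c :: s'.filter (· ≠ v) := by
          simp [hc]
        rw [hfil, List.Chain, List.chain_cons]
        exact ⟨mem_elimv_iff.2 ⟨⟨ha, hc⟩, Or.inl hac⟩, ih.1 c hc hcs⟩
    · intro h
      rw [List.Chain, List.chain_cons] at h
      obtain ⟨hvc, hcs⟩ := h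
      by_cases hc : c = v
      · subst hc
        have hfil : (c :: s').filter (· ≠ c) = s'.filter (· ≠ c) := by simp
        rw [hfil]
        exact ih.2 hcs
      · have hfil : (c :: s').filter (· ≠ v) = c :: s'.filter (· ≠ v) := by
          simp [hc]
        exact Or.inr ⟨c, s'.filter (· ≠ v), hfil, hvc, ih.1 c hc hcs⟩

lemma lemC (E : Finset (V × V)) (v : V) : ∀ (s : List V) (a j : V),
    List.Chain (fun a b => (a, b) ∈ elimv E v) a (s ++ [j]) →
    ∃ m : List V, List.Chain (fun a b => (a, b) ∈ E) a (m ++ [j]) ∧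
      ∀ x ∈ m, x = v ∨ x ∈ s := by
  intro s
  induction s with
  | nil =>
    intro a j h
    rw [List.nil_append, List.Chain, List.chain_cons] at h
    rcases (mem_elimv_iff.1 h.1).2 with haj | ⟨hav, hvj⟩
    · exact ⟨[], by simpa [List.Chain] using haj, by simp⟩
    · refine ⟨[v], ?_, by simp⟩
      simp [List.Chain, List.chain_cons, hav, hvj]
  | cons c s' ih =>
    intro a j h
    rw [List.cons_append, List.Chain, List.chain_cons] at h
    obtain ⟨m', hm'chain, hm'mem⟩ := ih c j h.2
    rcases (mem_elimv_iff.1 h.1).2 with hac | ⟨hav, hvc⟩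
    · refine ⟨c :: m', ?_, ?_⟩
      · rw [List.cons_append, List.Chain, List.chain_cons]; exact ⟨hac, hm'chain⟩
      · intro x hx
        rcases List.mem_cons.1 hx with rfl | hx
        · exact Or.inr List.mem_cons_self
        · rcases hm'mem x hx with h1 | h1
          · exact Or.inl h1
          · exact Or.inr (List.mem_cons_of_mem _ h1)
    · refine ⟨v :: c :: m', ?_, ?_⟩
      · rw [List.cons_append, List.cons_append, List.Chain, List.chain_cons, List.chain_cons]
        exact ⟨hav, hvc, hm'chain⟩
      · intro x hx
        rcases List.mem_cons.1 hx with rfl | hx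
        · exact Or.inl rfl
        rcases List.mem_cons.1 hx with rfl | hx
        · exact Or.inr List.mem_cons_self
        rcases hm'mem x hx with h1 | h1
        · exact Or.inl h1
        · exact Or.inr (List.mem_cons_of_mem _ h1)

lemma pathThrough_elimv (E : Finset (V × V)) (v : V) (X' : Finset V) (i j : V)
    (hi : i ≠ v) (hj : j ≠ v) :
    PathThrough (elimv E v) X' i j ↔ PathThrough E (insert v X') i j := by
  constructor
  · rintro ⟨l, hl, hchain⟩
    have hchain' : List.Chain (fun a b => (a, b) ∈ elimv E v) i (l ++ [j]) := hchain
    obtain ⟨m, hmchain, hmmem⟩ := lemC E v l i j hchain'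
    refine ⟨m, fun x hx => ?_, hmchain⟩
    rcases hmmem x hx with rfl | hx'
    · exact Finset.mem_insert_self _ _
    · exact Finset.mem_insert_of_mem (hl x hx')
  · rintro ⟨l, hl, hchain⟩
    have hchain' : List.Chain (fun a b => (a, b) ∈ E) i (l ++ [j]) := hchain
    have hfil := (lemAB E v (l ++ [j])).1 i hi hchain'
    have heq : (l ++ [j]).filter (· ≠ v) = l.filter (· ≠ v) ++ [j] := by
      rw [List.filter_append]
      simp [hj]
    rw [heq] at hfil
    refine ⟨l.filter (· ≠ v), fun x hx => ?_, hfil⟩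
    obtain ⟨hxl, hxv⟩ := List.mem_filter.1 hx
    have hxv' : x ≠ v := by simpa using hxv
    rcases Finset.mem_insert.1 (hl x hxl) with rfl | h
    · exact absurd rfl hxv'
    · exact h

lemma elimSeq_aux' : ∀ (σ : List V) (E : Finset (V × V)) (i j : V),
    i ∉ σ.toFinset → j ∉ σ.toFinset →
    ((i, j) ∈ elimSeq E σ ↔ PathThrough E σ.toFinset i j) := by
  intro σ
  induction σ with
  | nil =>
    intro E i j _ _
    simp only [List.foldl_nil, List.toFinset_nil]
    constructor
    · intro h
      exact ⟨[], by simp, by simpa [List.Chain', elimSeq] using h⟩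
    · rintro ⟨l, hl, hchain⟩
      have : l = [] := List.eq_nil_iff_forall_not_mem.2 fun x hx => by simpa using hl x hx
      subst this
      simpa [List.Chain', elimSeq] using hchain
  | cons v σ' ih =>
    intro E i j hi hj
    simp only [List.toFinset_cons] at hi hj ⊢
    have hiv : i ≠ v := fun h => hi (h ▸ Finset.mem_insert_self _ _)
    have hjv : j ≠ v := fun h => hj (h ▸ Finset.mem_insert_self _ _)
    have hi' : i ∉ σ'.toFinset := fun h => hi (Finset.mem_insert_of_mem h)
    have hj' : j ∉ σ'.toFinset := fun h => hj (Finset.mem_insert_of_mem h)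
    rw [show elimSeq E (v :: σ') = elimSeq (elimv E v) σ' from rfl, ih (elimv E v) i j hi' hj']
    exact pathThrough_elimv E v σ'.toFinset i j hiv hjv

/-- for `i, j ∉ X`, `(i,j)` is an edge of `D_X` iff `D` has a
directed path from `i` to `j` all of whose internal vertices lie in `X`. -/
theorem elimSeq_edge_iff_path (E : Finset (V × V)) (S I T : Finset V)
    (hD : IsDAGPartition E S I T) (X : Finset V) (hX : X ⊆ I)
    (i j : V) (hi : i ∉ X) (hj : j ∉ X)
    (σ : List V) (hσ : σ.Nodup) (hσX : σ.toFinset = X) :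
    (i, j) ∈ elimSeq E σ ↔ PathThrough E X i j := by
  subst hσX
  exact elimSeq_aux' σ E i j hi hj
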